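/- Let p be a prime and let K be a field of characteristic p which is an algebraic extension of its prime field 𝔽_p. Then K is a cyclic field: every finite separable extension of K is cyclic, i.e., for every finite Galois field extension L/K the Galois group Gal(L/K) is a cyclic group. -/

import Mathlib

open Polynomial IntermediateField

-- Lemma A: Galois group of a finite field over ZMod p is cyclic
theorem auxCyclic (p : ℕ) [Fact p.Prime] (F : Type*) [Field F] [Finite F]
    [Algebra (ZMod p) F] [CharP F p] : IsCyclic (F ≃ₐ[ZMod p] F) := by
  cases nonempty_fintype F
  haveI : FiniteDimensional (ZMod p) F := Module.Finite.of_finite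
  set n := Module.finrank (ZMod p) F with hn
  have hcard : Fintype.card F = p ^ n := by
    have := Module.card_eq_pow_finrank (K := ZMod p) (V := F)
    simpa [ZMod.card] using this
  -- Frobenius as an algebra equiv
  have hfrob_comm : ∀ r : ZMod p, (algebraMap (ZMod p) F r) ^ p = algebraMap (ZMod p) F r := by
    intro r
    rw [← map_pow, ZMod.pow_card]
  let φhom : F →ₐ[ZMod p] F :=
    { toRingHom := frobenius F p, commutes' := fun r => hfrob_comm r }
  have hinj : Function.Injective φhom := φhom.toRingHom.injective
  let φ : F ≃ₐ[ZMod p] F := AlgEquiv.ofBijective φhom (Finite.injective_iff_bijective.mp hinj)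
  have hφ : ∀ x : F, φ x = x ^ p := fun x => rfl
  have hpow : ∀ (m : ℕ) (x : F), (φ ^ m) x = x ^ p ^ m := by
    intro m
    induction m with
    | zero => intro x; simp
    | succ m ih =>
      intro x
      rw [pow_succ', AlgEquiv.mul_apply, hφ, ih, ← pow_mul, ← pow_succ]
  have hφn : φ ^ n = 1 := by
    ext x
    rw [hpow, AlgEquiv.one_apply, ← hcard, FiniteField.pow_card]
  have hd : orderOf φ ∣ n := orderOf_dvd_of_pow_eq_one hφn
  have hdpos : 0 < orderOf φ := by
    haveI : Finite (F ≃ₐ[ZMod p] F) := AlgEquiv.fintype (ZMod p) F |>.finite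
    exact orderOf_pos φ
  -- every x satisfies x ^ p ^ d = x
  have hroot : ∀ x : F, x ^ p ^ orderOf φ = x := by
    intro x
    have := pow_orderOf_eq_one φ
    calc x ^ p ^ orderOf φ = (φ ^ orderOf φ) x := (hpow _ x).symm
    _ = x := by rw [this]; rfl
  -- so card F ≤ p ^ d
  have hple : Fintype.card F ≤ p ^ orderOf φ := by
    classical
    set d := orderOf φ
    have h2 : 2 ≤ p ^ d := by
      calc 2 ≤ p := (Fact.out : p.Prime).two_le
      _ = p ^ 1 := (pow_one p).symm
      _ ≤ p ^ d := Nat.pow_le_pow_right (Fact.out : p.Prime).pos hdpos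
    set P : F[X] := X ^ (p ^ d) - X with hP
    have hdeg : P.natDegree = p ^ d := by
      rw [hP]
      have : (X : F[X]).natDegree < (X ^ (p ^ d) : F[X]).natDegree := by
        rw [natDegree_X, natDegree_X_pow]; omega
      rw [natDegree_sub_eq_left_of_natDegree_lt this, natDegree_X_pow]
    have hP0 : P ≠ 0 := fun h => by simp [h] at hdeg; omega
    have hmem : ∀ x : F, x ∈ P.roots.toFinset := by
      intro x
      rw [Multiset.mem_toFinset, mem_roots hP0]
      simp [hP, IsRoot.def, hroot x]
    calc Fintype.card F ≤ P.roots.toFinset.card :=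
          Fintype.card_le_of_injective (fun x : F => (⟨x, hmem x⟩ : P.roots.toFinset))
            (fun a b h => by simpa using congrArg Subtype.val h) |>.trans_eq
            (Fintype.card_coe _)
    _ ≤ Multiset.card P.roots := Multiset.toFinset_card_le _
    _ ≤ P.natDegree := P.card_roots'
    _ = p ^ d := hdeg
  have hnled : n ≤ orderOf φ := by
    have hp1 : 1 < p := (Fact.out : p.Prime).one_lt
    have : p ^ n ≤ p ^ orderOf φ := hcard ▸ hple
    exact (Nat.pow_le_pow_iff_right hp1).mp this
  have hord : orderOf φ = n := le_antisymm (Nat.le_of_dvd (by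
      have : 0 < n := Module.finrank_pos
      exact this) hd) hnled
  have hcardG : Nat.card (F ≃ₐ[ZMod p] F) = n := by
    rw [IsGalois.card_aut_eq_finrank]
  exact isCyclic_of_orderOf_eq_card φ (by rw [hord, hcardG])

/-- A field is *cyclic* if every finite Galois extension of it has cyclic Galois group. -/
def IsCyclicField (K : Type) [Field K] : Prop :=
  ∀ (L : Type) [Field L] [Algebra K L] [FiniteDimensional K L] [IsGalois K L],
    IsCyclic (L ≃ₐ[K] L)

theorem stmt8 (p : ℕ) (hp : p.Prime) (K : Type) [Field K] [CharP K p]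
    (halg : ∀ x : K, IsAlgebraic (⊥ : Subfield K) x) :
    IsCyclicField K := by
  intro L _ _ _ _
  haveI : Fact p.Prime := ⟨hp⟩
  letI : Algebra (ZMod p) K := ZMod.algebra _ _
  haveI : CharP L p := charP_of_injective_algebraMap (algebraMap K L).injective p
  letI : Algebra (ZMod p) L := ZMod.algebra _ _
  haveI : IsScalarTower (ZMod p) K L := IsScalarTower.of_algebraMap_eq' (RingHom.ext_zmod _ _)
  -- K is algebraic over ZMod p
  haveI halgK : Algebra.IsAlgebraic (ZMod p) K := by
    constructor
    intro x
    obtain ⟨q, hq0, hq⟩ := halg x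
    have hble : (⊥ : Subfield K) ≤ (algebraMap (ZMod p) K).fieldRange := bot_le
    let f : ZMod p →+* (⊥ : Subfield K) :=
      (algebraMap (ZMod p) K).codRestrict (⊥ : Subfield K).toSubring (by
        intro r
        show algebraMap (ZMod p) K r ∈ (⊥ : Subfield K)
        have : algebraMap (ZMod p) K r = ((r.val : ℕ) : K) := by
          rw [← map_natCast (algebraMap (ZMod p) K), ZMod.natCast_val, ZMod.cast_id]
        rw [this]
        exact natCast_mem _ _)
    have hfbij : Function.Bijective f := by
      constructor
      · intro a b hab
        have : algebraMap (ZMod p) K a = algebraMap (ZMod p) K b := congrArg Subtype.val hab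
        exact (algebraMap (ZMod p) K).injective this
      · rintro ⟨y, hy⟩
        obtain ⟨r, hr⟩ := hble hy
        exact ⟨r, Subtype.ext hr⟩
    let e : ZMod p ≃+* (⊥ : Subfield K) := RingEquiv.ofBijective f hfbij
    have hcomp : (algebraMap (ZMod p) K).comp (e.symm : (⊥ : Subfield K) →+* ZMod p)
        = algebraMap (⊥ : Subfield K) K := by
      ext y
      show algebraMap (ZMod p) K (e.symm y) = algebraMap _ K y
      have h1 : algebraMap (ZMod p) K (e.symm y) = ((f (e.symm y) : (⊥ : Subfield K)) : K) := rfl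
      have h2 : f (e.symm y) = y := e.apply_symm_apply y
      rw [h1, h2]
      rfl
    refine ⟨q.map (e.symm : (⊥ : Subfield K) →+* ZMod p), ?_, ?_⟩
    · exact Polynomial.map_ne_zero hq0
    · rw [Polynomial.aeval_def, Polynomial.eval₂_map, hcomp, ← Polynomial.aeval_def]
      exact hq
  haveI : Algebra.IsAlgebraic K L := Algebra.IsAlgebraic.of_finite K L
  haveI : Algebra.IsAlgebraic (ZMod p) L := Algebra.IsAlgebraic.trans (ZMod p) K L
  obtain ⟨α, hα⟩ := Field.exists_primitive_element K L
  have hint : IsIntegral (ZMod p) α := (Algebra.IsAlgebraic.isAlgebraic α).isIntegral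
  let F : IntermediateField (ZMod p) L := IntermediateField.adjoin (ZMod p) {α}
  haveI : FiniteDimensional (ZMod p) F := IntermediateField.adjoin.finiteDimensional hint
  haveI : Finite F := Module.finite_of_finite (ZMod p)
  haveI : Fintype F := Fintype.ofFinite F
  haveI : CharP F p := (Algebra.charP_iff F L p).mpr ‹CharP L p›
  set q := Fintype.card F with hqdef
  have hq2 : 1 < q := Fintype.one_lt_card
  have hαF : α ∈ F := IntermediateField.subset_adjoin _ _ rfl
  have hpowF : ∀ x : L, x ∈ F → x ^ q = x := by
    intro x hx
    have h := FiniteField.pow_card (⟨x, hx⟩ : F)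
    simpa using congrArg Subtype.val h
  -- root characterization of F
  classical
  have hroots : ∀ x : L, x ^ q = x → x ∈ F := by
    set P : L[X] := X ^ q - X with hP
    have hdeg : P.natDegree = q := by
      have : (X : L[X]).natDegree < (X ^ q : L[X]).natDegree := by simpa using hq2
      rw [hP, natDegree_sub_eq_left_of_natDegree_lt this, natDegree_X_pow]
    have hP0 : P ≠ 0 := fun h => by simp [h] at hdeg; omega
    have hmem : ∀ y : F, (y : L) ∈ P.roots.toFinset := fun y => by
      rw [Multiset.mem_toFinset, mem_roots hP0]
      simp [hP, IsRoot.def, hpowF y y.2]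
    set Fimg : Finset L := Finset.univ.image (fun y : F => (y : L)) with hFimg
    have hsub : Fimg ⊆ P.roots.toFinset := by
      intro z hz
      simp only [hFimg, Finset.mem_image, Finset.mem_univ, true_and] at hz
      obtain ⟨y, rfl⟩ := hz
      exact hmem y
    have hcardFimg : Fimg.card = q := by
      rw [hFimg, Finset.card_image_of_injective _ Subtype.val_injective, Finset.card_univ]
    have hcardT : P.roots.toFinset.card ≤ q :=
      le_trans (Multiset.toFinset_card_le _) (le_trans P.card_roots' hdeg.le)
    have heq : Fimg = P.roots.toFinset :=
      Finset.eq_of_subset_of_card_le hsub (by rw [hcardFimg]; exact hcardT)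
    intro x hx
    have hxT : x ∈ P.roots.toFinset := by
      rw [Multiset.mem_toFinset, mem_roots hP0]
      simp [hP, IsRoot.def, hx]
    rw [← heq] at hxT
    simp only [hFimg, Finset.mem_image, Finset.mem_univ, true_and] at hxT
    obtain ⟨y, hy⟩ := hxT
    exact hy ▸ y.2
  have hσmem : ∀ (σ : L ≃ₐ[K] L) (x : L), x ∈ F → σ x ∈ F := fun σ x hx =>
    hroots _ (by rw [← map_pow, hpowF x hx])
  -- restriction homomorphism
  let r : (L ≃ₐ[K] L) → (F →ₐ[ZMod p] F) := fun σ =>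
    { toFun := fun x => ⟨σ x, hσmem σ x x.2⟩
      map_one' := Subtype.ext (by simp)
      map_mul' := fun a b => Subtype.ext (by simp)
      map_zero' := Subtype.ext (by simp)
      map_add' := fun a b => Subtype.ext (by simp)
      commutes' := fun c => Subtype.ext (by
        show σ ((algebraMap (ZMod p) F c : F) : L) = ((algebraMap (ZMod p) F c : F) : L)
        have h1 : ((algebraMap (ZMod p) F c : F) : L) = algebraMap (ZMod p) L c :=
          (IsScalarTower.algebraMap_apply (ZMod p) F L c).symm
        rw [h1]
        have h2 : ((σ : L ≃+* L) : L →+* L).comp (algebraMap (ZMod p) L) = algebraMap (ZMod p) L :=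
          RingHom.ext_zmod _ _
        exact RingHom.congr_fun h2 c) }
  have hrbij : ∀ σ, Function.Bijective (r σ) := fun σ =>
    Finite.injective_iff_bijective.mp (r σ).toRingHom.injective
  let Φ : (L ≃ₐ[K] L) →* (F ≃ₐ[ZMod p] F) :=
    { toFun := fun σ => AlgEquiv.ofBijective (r σ) (hrbij σ)
      map_one' := by
        ext x
        rfl
      map_mul' := fun σ τ => by
        ext x
        rfl }
  haveI : IsCyclic (F ≃ₐ[ZMod p] F) := auxCyclic p F
  have hinj : Function.Injective Φ := by
    intro σ τ h
    have hval : σ α = τ α := by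
      have := congrFun (congrArg (fun (ψ : F ≃ₐ[ZMod p] F) => (ψ : F → F)) h) ⟨α, hαF⟩
      exact congrArg Subtype.val this
    ext x
    have hx : x ∈ IntermediateField.adjoin K {α} := by rw [hα]; trivial
    exact IntermediateField.adjoin_induction (F := K) (p := fun y _ => σ y = τ y)
      (fun y hy => by have h' := Set.mem_singleton_iff.mp hy; subst h'; exact hval)
      (fun y => by simp)
      (fun a b _ _ ha hb => by simp only [map_add, ha, hb])
      (fun a _ ha => by simp only [map_inv₀, ha])
      (fun a b _ _ ha hb => by simp only [map_mul, ha, hb]) hx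
  haveI : IsCyclic Φ.range := Subgroup.isCyclic Φ.range
  exact isCyclic_of_surjective (MonoidHom.ofInjective hinj).symm
    (MonoidHom.ofInjective hinj).symm.surjective
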